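/- Let N ≥ 0 be an even integer, let n > N be an integer, and set α = n − N − 1. Then ∫₀^∞ x^{(α−1)/2} · e^{−x/2} · L_N^{α}(x) dx = 2^{(3−α)/2} · Γ(n) · Γ((N+3)/2) / ( (N+1) · Γ(N+1) · Γ((n+1)/2) ). -/

import Mathlib

open Real MeasureTheory Set

/-- Generalized Laguerre polynomial
L_N^α(x) = Σ_{k=0}^N (−1)^k · Γ(N+α+1)/(Γ(k+α+1)·(N−k)!·k!) · x^k. -/
noncomputable def laguerreL (N : ℕ) (α : ℝ) (x : ℝ) : ℝ :=
  ∑ k ∈ Finset.range (N + 1),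
    (-1 : ℝ) ^ k *
      (Real.Gamma ((N : ℝ) + α + 1) /
        (Real.Gamma ((k : ℝ) + α + 1) * (Nat.factorial (N - k)) * (Nat.factorial k))) *
      x ^ k

section Aux

open Finset

private lemma choose_cast_succ' (n k : ℕ) :
    ((n.choose (k+1) : ℝ)) * (k+1) = (n.choose k : ℝ) * ((n:ℝ) - k) := by
  rcases le_or_gt (k+1) n with h | h
  · have hk : k ≤ n := by omega
    have h1 : ((n.choose (k+1) * (k+1) : ℕ) : ℝ) = ((n.choose k * (n - k) : ℕ) : ℝ) := by
      rw [Nat.choose_succ_right_eq n k]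
    push_cast [Nat.cast_sub hk] at h1
    linarith [h1]
  · rcases eq_or_lt_of_le (Nat.lt_succ_iff.mp h) with h2 | h2
    · subst h2; simp [Nat.choose_succ_self]
    · rw [Nat.choose_eq_zero_of_lt h2, Nat.choose_eq_zero_of_lt (by omega)]
      simp

private lemma pascal_sum' (φ : ℕ → ℝ) (n : ℕ) :
    ∑ k ∈ range (n+2), (-2:ℝ)^k * ((n+1).choose k) * φ k
      = ∑ k ∈ range (n+1), (-2:ℝ)^k * (n.choose k) * φ k
        - 2 * ∑ k ∈ range (n+1), (-2:ℝ)^k * (n.choose k) * φ (k+1) := by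
  have key : ∀ i, (-2:ℝ)^(i+1) * ((n+1).choose (i+1)) * φ (i+1)
      = (-2:ℝ)^(i+1) * (n.choose (i+1)) * φ (i+1)
        + (-2) * ((-2:ℝ)^i * (n.choose i) * φ (i+1)) := by
    intro i
    rw [Nat.choose_succ_succ]
    push_cast
    ring
  rw [Finset.sum_range_succ' _ (n+1)]
  simp_rw [key]
  rw [Finset.sum_add_distrib]
  have h0 : (-2:ℝ)^0 * (((n+1).choose 0 : ℕ):ℝ) * φ 0 = (-2:ℝ)^0 * ((n.choose 0 : ℕ):ℝ) * φ 0 := by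
    simp
  rw [h0]
  have h1 : ∑ i ∈ range (n+1), (-2:ℝ)^(i+1) * (n.choose (i+1)) * φ (i+1)
      + (-2:ℝ)^0 * ((n.choose 0 : ℕ):ℝ) * φ 0
      = ∑ k ∈ range (n+2), (-2:ℝ)^k * (n.choose k) * φ k := by
    rw [Finset.sum_range_succ' (fun k => (-2:ℝ)^k * (n.choose k) * φ k) (n+1)]
  have h2 : ∑ k ∈ range (n+2), (-2:ℝ)^k * (n.choose k) * φ k
      = ∑ k ∈ range (n+1), (-2:ℝ)^k * (n.choose k) * φ k := by
    rw [Finset.sum_range_succ]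
    simp [Nat.choose_succ_self]
  have h3 : ∑ i ∈ range (n+1), (-2:ℝ) * ((-2:ℝ)^i * (n.choose i) * φ (i+1))
      = -2 * ∑ k ∈ range (n+1), (-2:ℝ)^k * (n.choose k) * φ (k+1) := by
    rw [Finset.mul_sum]
  linarith [h1, h2, h3]

private lemma tele' (b : ℝ) (hb : 0 < b) (m : ℕ) :
    ∑ k ∈ range (2*m+1), ((-2:ℝ)^k * (((2*m).choose k : ℕ):ℝ)
        * (Real.Gamma ((k:ℝ)+b) / Real.Gamma ((k:ℝ)+2*b)))
      * (2*(2*b+2*(m:ℝ)+1)*((k:ℝ)+b)/(((k:ℝ)+2*b)*((k:ℝ)+1+2*b)) - 1) = 0 := by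
  set g : ℕ → ℝ := fun k =>
    -(k:ℝ) * (-2:ℝ)^k * (((2*m).choose k : ℕ):ℝ)
      * Real.Gamma ((k:ℝ)+b) / Real.Gamma ((k:ℝ)+2*b+1) with hg
  have key : ∀ k : ℕ, ((-2:ℝ)^k * (((2*m).choose k : ℕ):ℝ)
        * (Real.Gamma ((k:ℝ)+b) / Real.Gamma ((k:ℝ)+2*b)))
      * (2*(2*b+2*(m:ℝ)+1)*((k:ℝ)+b)/(((k:ℝ)+2*b)*((k:ℝ)+1+2*b)) - 1)
      = g (k+1) - g k := by
    intro k
    have hGpos : 0 < Real.Gamma ((k:ℝ)+2*b) := Real.Gamma_pos_of_pos (by positivity)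
    have hne : Real.Gamma ((k:ℝ)+2*b) ≠ 0 := ne_of_gt hGpos
    have hd1 : ((k:ℝ)+2*b) ≠ 0 := by positivity
    have hd2 : ((k:ℝ)+1+2*b) ≠ 0 := by positivity
    have hd3 : ((k:ℝ)+1) ≠ 0 := by positivity
    have hG1 : Real.Gamma ((k:ℝ)+1+b) = ((k:ℝ)+b) * Real.Gamma ((k:ℝ)+b) := by
      rw [show (k:ℝ)+1+b = ((k:ℝ)+b)+1 by ring, Real.Gamma_add_one (by positivity)]
    have hG3 : Real.Gamma ((k:ℝ)+2*b+1) = ((k:ℝ)+2*b) * Real.Gamma ((k:ℝ)+2*b) := by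
      rw [Real.Gamma_add_one hd1]
    have hG2 : Real.Gamma ((k:ℝ)+1+2*b+1) = ((k:ℝ)+1+2*b) * ((k:ℝ)+2*b) * Real.Gamma ((k:ℝ)+2*b) := by
      rw [Real.Gamma_add_one hd2, show (k:ℝ)+1+2*b = ((k:ℝ)+2*b)+1 by ring,
        Real.Gamma_add_one hd1]; ring
    have hC : (((2*m).choose (k+1) : ℕ):ℝ) = (((2*m).choose k : ℕ):ℝ) * ((2*(m:ℝ))-k)/((k:ℝ)+1) := by
      have := choose_cast_succ' (2*m) k
      push_cast at this ⊢
      field_simp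
      linarith [this]
    simp only [hg]
    push_cast
    rw [hC, hG1, hG2, hG3]
    field_simp
    ring
  rw [Finset.sum_congr rfl (fun k _ => key k), Finset.sum_range_sub g (2*m+1)]
  have : ((2*m).choose (2*m+1)) = 0 := Nat.choose_eq_zero_of_lt (by omega)
  simp [hg, this]

/-- The hypergeometric-type sum appearing after termwise integration. -/
noncomputable def Asum (b : ℝ) (m : ℕ) : ℝ :=
  ∑ k ∈ range (2*m+1), (-2:ℝ)^k * (((2*m).choose k : ℕ):ℝ)
    * (Real.Gamma ((k:ℝ)+b) / Real.Gamma ((k:ℝ)+2*b))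

private lemma recA' (b : ℝ) (hb : 0 < b) (m : ℕ) :
    (2*b+2*(m:ℝ)+1) * Asum b (m+1) = (2*(m:ℝ)+1) * Asum b m := by
  set τ : ℕ → ℝ := fun k => Real.Gamma ((k:ℝ)+b) / Real.Gamma ((k:ℝ)+2*b) with hτ
  have hA1 : Asum b (m+1)
      = ∑ k ∈ range (2*m+1), (-2:ℝ)^k * (((2*m).choose k : ℕ):ℝ) * τ k
        - 4 * ∑ k ∈ range (2*m+1), (-2:ℝ)^k * (((2*m).choose k : ℕ):ℝ) * τ (k+1)
        + 4 * ∑ k ∈ range (2*m+1), (-2:ℝ)^k * (((2*m).choose k : ℕ):ℝ) * τ (k+2) := by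
    have e1 : 2*(m+1) = (2*m+1)+1 := by ring
    unfold Asum
    rw [e1]
    have p1 := pascal_sum' τ (2*m+1)
    have p2 := pascal_sum' τ (2*m)
    have p3 := pascal_sum' (fun k => τ (k+1)) (2*m)
    rw [show (2*m+1)+1+1 = (2*m+1)+2 from rfl]
    rw [p1]
    rw [show (2*m+1)+1 = (2*m)+2 from by ring] at *
    rw [p2, p3]
    ring
  have key : ∀ k : ℕ,
      (2*b) * ((-2:ℝ)^k * (((2*m).choose k : ℕ):ℝ) * τ k)
      - (4*(2*b+2*(m:ℝ)+1)) * ((-2:ℝ)^k * (((2*m).choose k : ℕ):ℝ) * τ (k+1))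
      + (4*(2*b+2*(m:ℝ)+1)) * ((-2:ℝ)^k * (((2*m).choose k : ℕ):ℝ) * τ (k+2))
      = (-2*b) * (((-2:ℝ)^k * (((2*m).choose k : ℕ):ℝ)
          * (Real.Gamma ((k:ℝ)+b) / Real.Gamma ((k:ℝ)+2*b)))
        * (2*(2*b+2*(m:ℝ)+1)*((k:ℝ)+b)/(((k:ℝ)+2*b)*((k:ℝ)+1+2*b)) - 1)) := by
    intro k
    have hne : Real.Gamma ((k:ℝ)+2*b) ≠ 0 :=
      ne_of_gt (Real.Gamma_pos_of_pos (by positivity))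
    have hd1 : ((k:ℝ)+2*b) ≠ 0 := by positivity
    have hd2 : ((k:ℝ)+1+2*b) ≠ 0 := by positivity
    have hG1b : Real.Gamma ((k:ℝ)+1+b) = ((k:ℝ)+b) * Real.Gamma ((k:ℝ)+b) := by
      rw [show (k:ℝ)+1+b = ((k:ℝ)+b)+1 by ring, Real.Gamma_add_one (by positivity)]
    have hG12b : Real.Gamma ((k:ℝ)+1+2*b) = ((k:ℝ)+2*b) * Real.Gamma ((k:ℝ)+2*b) := by
      rw [show (k:ℝ)+1+2*b = ((k:ℝ)+2*b)+1 by ring, Real.Gamma_add_one hd1]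
    have hG2b : Real.Gamma ((k:ℝ)+2+b) = ((k:ℝ)+1+b) * (((k:ℝ)+b) * Real.Gamma ((k:ℝ)+b)) := by
      rw [show (k:ℝ)+2+b = ((k:ℝ)+1+b)+1 by ring, Real.Gamma_add_one (by positivity), hG1b]
    have hG22b : Real.Gamma ((k:ℝ)+2+2*b)
        = ((k:ℝ)+1+2*b) * (((k:ℝ)+2*b) * Real.Gamma ((k:ℝ)+2*b)) := by
      rw [show (k:ℝ)+2+2*b = ((k:ℝ)+1+2*b)+1 by ring, Real.Gamma_add_one hd2, hG12b]
    simp only [hτ]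
    push_cast
    rw [hG1b, hG12b, hG2b, hG22b]
    field_simp
    ring
  have hsum : ∑ k ∈ range (2*m+1),
      ((2*b) * ((-2:ℝ)^k * (((2*m).choose k : ℕ):ℝ) * τ k)
      - (4*(2*b+2*(m:ℝ)+1)) * ((-2:ℝ)^k * (((2*m).choose k : ℕ):ℝ) * τ (k+1))
      + (4*(2*b+2*(m:ℝ)+1)) * ((-2:ℝ)^k * (((2*m).choose k : ℕ):ℝ) * τ (k+2))) = 0 := by
    rw [Finset.sum_congr rfl (fun k _ => key k), ← Finset.mul_sum, tele' b hb m, mul_zero]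
  have hexp : ∑ k ∈ range (2*m+1),
      ((2*b) * ((-2:ℝ)^k * (((2*m).choose k : ℕ):ℝ) * τ k)
      - (4*(2*b+2*(m:ℝ)+1)) * ((-2:ℝ)^k * (((2*m).choose k : ℕ):ℝ) * τ (k+1))
      + (4*(2*b+2*(m:ℝ)+1)) * ((-2:ℝ)^k * (((2*m).choose k : ℕ):ℝ) * τ (k+2)))
      = (2*b) * (∑ k ∈ range (2*m+1), (-2:ℝ)^k * (((2*m).choose k : ℕ):ℝ) * τ k)
      - (4*(2*b+2*(m:ℝ)+1)) * (∑ k ∈ range (2*m+1), (-2:ℝ)^k * (((2*m).choose k : ℕ):ℝ) * τ (k+1))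
      + (4*(2*b+2*(m:ℝ)+1)) * (∑ k ∈ range (2*m+1), (-2:ℝ)^k * (((2*m).choose k : ℕ):ℝ) * τ (k+2)) := by
    rw [Finset.sum_add_distrib, Finset.sum_sub_distrib, ← Finset.mul_sum, ← Finset.mul_sum,
      ← Finset.mul_sum]
  rw [hexp] at hsum
  have hAm : Asum b m = ∑ k ∈ range (2*m+1), (-2:ℝ)^k * (((2*m).choose k : ℕ):ℝ) * τ k := by
    unfold Asum; apply Finset.sum_congr rfl; intro k _; simp [hτ]
  rw [hA1, hAm]
  linarith [hsum]

private lemma Asum_eq (b : ℝ) (hb : 0 < b) (m : ℕ) :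
    Asum b m = 2^(2-2*b) * Real.Gamma ((m:ℝ)+3/2)
      / ((2*(m:ℝ)+1) * Real.Gamma (b+(m:ℝ)+1/2)) := by
  induction m with
  | zero =>
    have h0 : Asum b 0 = Real.Gamma b / Real.Gamma (2*b) := by
      unfold Asum
      simp
    have hdup := Real.Gamma_mul_Gamma_add_half b
    have h32 : Real.Gamma ((3:ℝ)/2) = Real.sqrt π / 2 := by
      rw [show (3:ℝ)/2 = 1/2 + 1 by norm_num, Real.Gamma_add_one (by norm_num),
        Real.Gamma_one_half_eq]
      ring
    have hG2b : Real.Gamma (2*b) ≠ 0 := ne_of_gt (Real.Gamma_pos_of_pos (by positivity))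
    have hGbh : Real.Gamma (b+1/2) ≠ 0 := ne_of_gt (Real.Gamma_pos_of_pos (by positivity))
    have hpow : (2:ℝ)^(2-2*b) = 2 * (2:ℝ)^(1-2*b) := by
      rw [show (2:ℝ)-2*b = 1 + (1-2*b) by ring, Real.rpow_add (by norm_num), Real.rpow_one]
    rw [h0]
    push_cast
    rw [show (0:ℝ)+3/2 = 3/2 by norm_num, show b+0+1/2 = b+1/2 by ring,
      show (2:ℝ)*0+1 = 1 by norm_num, h32, hpow]
    rw [div_eq_div_iff hG2b (by simpa using hGbh)]
    linear_combination hdup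
  | succ m ih =>
    have hrec := recA' b hb m
    have hd : (2*b+2*(m:ℝ)+1) ≠ 0 := by positivity
    have hG1 : Real.Gamma ((m:ℝ)+1+3/2) = ((m:ℝ)+3/2) * Real.Gamma ((m:ℝ)+3/2) := by
      rw [show (m:ℝ)+1+3/2 = ((m:ℝ)+3/2)+1 by ring, Real.Gamma_add_one (by positivity)]
    have hG2 : Real.Gamma (b+((m:ℝ)+1)+1/2) = (b+(m:ℝ)+1/2) * Real.Gamma (b+(m:ℝ)+1/2) := by
      rw [show b+((m:ℝ)+1)+1/2 = (b+(m:ℝ)+1/2)+1 by ring, Real.Gamma_add_one (by positivity)]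
    have hGpos1 : (0:ℝ) < Real.Gamma ((m:ℝ)+3/2) := Real.Gamma_pos_of_pos (by positivity)
    have hGpos2 : (0:ℝ) < Real.Gamma (b+(m:ℝ)+1/2) := Real.Gamma_pos_of_pos (by positivity)
    have goal2 : Asum b (m+1) = (2*(m:ℝ)+1) * Asum b m / (2*b+2*(m:ℝ)+1) := by
      field_simp
      linarith [hrec]
    rw [goal2, ih]
    push_cast
    rw [hG1, hG2]
    rw [div_eq_div_iff (by positivity) (by positivity)]
    field_simp
    ring

private lemma integral_eq' (N n : ℕ) (hnN : N < n) :
    ∫ x in Ioi (0 : ℝ),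
        x ^ ((((n : ℝ) - (N : ℝ) - 1) - 1) / 2) * Real.exp (-x / 2) *
          laguerreL N ((n : ℝ) - (N : ℝ) - 1) x
      = (2 : ℝ) ^ (((n:ℝ)-(N:ℝ))/2) * Real.Gamma (n:ℝ) / (Nat.factorial N)
        * ∑ k ∈ Finset.range (N+1), (-2:ℝ)^k * ((N.choose k : ℕ):ℝ)
            * (Real.Gamma ((k:ℝ) + ((n:ℝ)-(N:ℝ))/2)
              / Real.Gamma ((k:ℝ) + 2 * (((n:ℝ)-(N:ℝ))/2))) := by
  set α : ℝ := (n:ℝ) - (N:ℝ) - 1 with hα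
  set b : ℝ := ((n:ℝ)-(N:ℝ))/2 with hb
  have hbpos : 0 < b := by
    rw [hb]
    have : (N:ℝ) < (n:ℝ) := by exact_mod_cast hnN
    linarith
  set c : ℕ → ℝ := fun k => (-1 : ℝ) ^ k *
      (Real.Gamma ((N : ℝ) + α + 1) /
        (Real.Gamma ((k : ℝ) + α + 1) * (Nat.factorial (N - k)) * (Nat.factorial k))) with hc
  have stepA : ∀ x ∈ Ioi (0:ℝ),
      x ^ ((α - 1) / 2) * Real.exp (-x / 2) * laguerreL N α x
      = ∑ k ∈ Finset.range (N+1), c k * (x ^ (((k:ℝ)+b) - 1) * Real.exp (-(2⁻¹ * x))) := by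
    intro x hx
    have hx0 : 0 < x := hx
    unfold laguerreL
    rw [Finset.mul_sum]
    apply Finset.sum_congr rfl
    intro k _
    have hxk : (x : ℝ) ^ (k:ℕ) = x ^ ((k:ℕ):ℝ) := (Real.rpow_natCast x k).symm
    have hre : x ^ ((α - 1) / 2) * x ^ ((k:ℕ):ℝ) = x ^ (((k:ℝ)+b) - 1) := by
      rw [← Real.rpow_add hx0]
      congr 1
      rw [hb, hα]
      ring
    have hexp : Real.exp (-x / 2) = Real.exp (-(2⁻¹ * x)) := by ring_nf
    rw [hxk, hexp, hc]
    calc x ^ ((α - 1) / 2) * Real.exp (-(2⁻¹ * x)) * ((-1 : ℝ) ^ k *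
        (Real.Gamma ((N : ℝ) + α + 1) /
          (Real.Gamma ((k : ℝ) + α + 1) * (Nat.factorial (N - k)) * (Nat.factorial k))) *
        x ^ ((k:ℕ):ℝ))
        = ((-1 : ℝ) ^ k *
        (Real.Gamma ((N : ℝ) + α + 1) /
          (Real.Gamma ((k : ℝ) + α + 1) * (Nat.factorial (N - k)) * (Nat.factorial k)))) *
          ((x ^ ((α - 1) / 2) * x ^ ((k:ℕ):ℝ)) * Real.exp (-(2⁻¹ * x))) := by ring
      _ = _ := by rw [hre]
  rw [show (((n : ℝ) - (N : ℝ) - 1) - 1) / 2 = (α - 1)/2 from by rw [hα]]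
  rw [MeasureTheory.setIntegral_congr_fun measurableSet_Ioi stepA]
  have hint : ∀ k : ℕ, IntegrableOn
      (fun x : ℝ => x ^ (((k:ℝ)+b) - 1) * Real.exp (-(2⁻¹ * x))) (Ioi 0) := by
    intro k
    have h := integrableOn_rpow_mul_exp_neg_mul_rpow
      (s := (k:ℝ)+b-1) (p := 1) (b := 2⁻¹)
      (by nlinarith [hbpos, Nat.cast_nonneg (α := ℝ) k]) (by norm_num) (by norm_num)
    apply h.congr_fun _ measurableSet_Ioi
    intro x hx
    simp only [Real.rpow_one]
    ring_nf
  rw [MeasureTheory.integral_finset_sum]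
  swap
  · intro k _
    exact (hint k).const_mul (c k)
  have heval : ∀ k : ℕ,
      ∫ x in Ioi (0:ℝ), c k * (x ^ (((k:ℝ)+b) - 1) * Real.exp (-(2⁻¹ * x)))
      = c k * ((2:ℝ) ^ ((k:ℝ)+b) * Real.Gamma ((k:ℝ)+b)) := by
    intro k
    rw [MeasureTheory.integral_const_mul]
    congr 1
    have := integral_rpow_mul_exp_neg_mul_Ioi (a := (k:ℝ)+b) (r := 2⁻¹)
      (by positivity) (by norm_num)
    rw [this]
    norm_num
  rw [Finset.sum_congr rfl (fun k _ => heval k)]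
  rw [Finset.mul_sum]
  apply Finset.sum_congr rfl
  intro k hk
  have hkN : k ≤ N := by
    have := Finset.mem_range.mp hk; omega
  have hGn : Real.Gamma ((N:ℝ) + α + 1) = Real.Gamma (n:ℝ) := by
    congr 1; rw [hα]; ring
  have hGk : Real.Gamma ((k:ℝ) + α + 1) = Real.Gamma ((k:ℝ) + 2*b) := by
    congr 1; rw [hα, hb]; ring
  have hpow2 : (2:ℝ) ^ ((k:ℝ)+b) = 2 ^ (k:ℕ) * (2:ℝ) ^ b := by
    rw [Real.rpow_add (by norm_num), Real.rpow_natCast]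
  have hchoose : ((N.choose k : ℕ):ℝ)
      = (Nat.factorial N : ℝ) / ((Nat.factorial k : ℝ) * (Nat.factorial (N-k) : ℝ)) := by
    exact_mod_cast Nat.cast_choose ℝ hkN
  have hGk2 : Real.Gamma ((k:ℝ)+2*b) ≠ 0 :=
    ne_of_gt (Real.Gamma_pos_of_pos (by positivity))
  have hf1 : (Nat.factorial k : ℝ) ≠ 0 := by positivity
  have hf2 : (Nat.factorial (N-k) : ℝ) ≠ 0 := by positivity
  have hf3 : (Nat.factorial N : ℝ) ≠ 0 := by positivity
  rw [hc]
  simp only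
  rw [hGn, hGk, hpow2, hchoose]
  field_simp
  rw [show ((-2:ℝ))^k = (-1:ℝ)^k * 2^k by rw [← neg_one_mul, mul_pow]]
  ring

end Aux

theorem stmt_18 (N n : ℕ) (hev : Even N) (hnN : N < n) :
    ∫ x in Ioi (0 : ℝ),
        x ^ ((((n : ℝ) - (N : ℝ) - 1) - 1) / 2) * Real.exp (-x / 2) *
          laguerreL N ((n : ℝ) - (N : ℝ) - 1) x
      = 2 ^ ((3 - ((n : ℝ) - (N : ℝ) - 1)) / 2) * Real.Gamma (n : ℝ) *
          Real.Gamma (((N : ℝ) + 3) / 2) /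
          (((N : ℝ) + 1) * Real.Gamma ((N : ℝ) + 1) * Real.Gamma (((n : ℝ) + 1) / 2)) := by
  obtain ⟨m, rfl⟩ := hev
  have hm2 : m + m = 2 * m := by ring
  rw [integral_eq' (m+m) n hnN]
  set b : ℝ := ((n:ℝ)-((m+m:ℕ):ℝ))/2 with hb
  have hbpos : 0 < b := by
    rw [hb]
    have : ((m+m:ℕ):ℝ) < (n:ℝ) := by exact_mod_cast hnN
    linarith
  have hAs : ∑ k ∈ Finset.range ((m+m)+1), (-2:ℝ)^k * (((m+m).choose k : ℕ):ℝ)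
      * (Real.Gamma ((k:ℝ) + b) / Real.Gamma ((k:ℝ) + 2 * b)) = Asum b m := by
    unfold Asum
    rw [hm2]
  rw [hAs, Asum_eq b hbpos m]
  -- now pure algebra with Gamma values
  have hNfact : Real.Gamma (((m+m:ℕ):ℝ) + 1) = (Nat.factorial (m+m) : ℝ) :=
    Real.Gamma_nat_eq_factorial (m+m)
  have hG32 : Real.Gamma ((((m+m:ℕ):ℝ) + 3) / 2) = Real.Gamma ((m:ℝ)+3/2) := by
    congr 1; push_cast; ring
  have hGn1 : Real.Gamma (b+(m:ℝ)+1/2) = Real.Gamma (((n:ℝ)+1)/2) := by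
    congr 1; rw [hb]; push_cast; ring
  have hpow : (2:ℝ) ^ ((3 - ((n:ℝ) - ((m+m:ℕ):ℝ) - 1)) / 2)
      = (2:ℝ) ^ b * (2:ℝ) ^ (2-2*b) := by
    rw [← Real.rpow_add (by norm_num)]
    congr 1
    rw [hb]; push_cast; ring
  rw [hNfact, hG32, ← hGn1, hpow]
  have hGpos1 : (0:ℝ) < Real.Gamma ((m:ℝ)+3/2) := Real.Gamma_pos_of_pos (by positivity)
  have hGpos2 : (0:ℝ) < Real.Gamma (b+(m:ℝ)+1/2) := Real.Gamma_pos_of_pos (by positivity)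
  have hf : (0:ℝ) < (Nat.factorial (m+m) : ℝ) := by positivity
  have hp1 : (0:ℝ) < (2:ℝ)^b := Real.rpow_pos_of_pos (by norm_num) _
  have hp2 : (0:ℝ) < (2:ℝ)^(2-2*b) := Real.rpow_pos_of_pos (by norm_num) _
  have hcast : ((m+m:ℕ):ℝ) = 2*(m:ℝ) := by push_cast; ring
  rw [hcast]
  field_simp
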